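/- arXiv:1609.05756 — 4 statements merged into one kernel-verified Lean document; each statement's English description precedes it below -/
import Mathlib

section
/- Suppose u: [0, δ) → ℝ is C² with u(0) = 0 and u(z) > 0 for z > 0, and u satisfies u·(u'' - (2/(1-z))·u') - (3/2)·(u'² - 1) = F·u² on [0, δ) for some continuous function F. Then u'(0) = 1. -/
open Set

/-- Regularity condition at null infinity from the rescaled Hamiltonian constraint:
if `u` is `C²` on `[0, δ)` with `u(0) = 0`, `u > 0` on `(0, δ)`, and
`u·(u'' - (2/(1-z))·u') - (3/2)·(u'² - 1) = F·u²` with `F` continuous, then `u'(0) = 1`. -/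
theorem hamiltonian_regularity_first_derivative
    (δ : ℝ) (hδ0 : 0 < δ) (hδ1 : δ < 1)
    (u u' u'' F : ℝ → ℝ)
    (hder : ∀ z ∈ Ico (0 : ℝ) δ, HasDerivWithinAt u (u' z) (Ico 0 δ) z)
    (hder' : ∀ z ∈ Ico (0 : ℝ) δ, HasDerivWithinAt u' (u'' z) (Ico 0 δ) z)
    (hcont : ContinuousOn u'' (Ico 0 δ))
    (hF : ContinuousOn F (Ico 0 δ))
    (hu0 : u 0 = 0)
    (hupos : ∀ z ∈ Ioo (0 : ℝ) δ, 0 < u z)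
    (hODE : ∀ z ∈ Ico (0 : ℝ) δ,
      u z * (u'' z - (2 / (1 - z)) * u' z) - (3 / 2) * ((u' z) ^ 2 - 1)
        = F z * (u z) ^ 2) :
    u' 0 = 1 := by
  have h0 : (0 : ℝ) ∈ Ico (0 : ℝ) δ := ⟨le_refl 0, hδ0⟩
  have hsq : (u' 0) ^ 2 = 1 := by
    have := hODE 0 h0
    rw [hu0] at this
    nlinarith [this]
  -- u'(0) ≥ 0 since u ≥ 0 near 0 and u 0 = 0
  have hnonneg : 0 ≤ u' 0 := by
    have hd := hder 0 h0
    rw [hasDerivWithinAt_iff_tendsto_slope] at hd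
    haveI : (nhdsWithin (0:ℝ) (Ico 0 δ \ {0})).NeBot := by
      rw [Ico_diff_left]
      exact mem_closure_iff_nhdsWithin_neBot.mp
        (by rw [closure_Ioo hδ0.ne]; exact left_mem_Icc.mpr hδ0.le)
    refine le_of_tendsto_of_tendsto tendsto_const_nhds hd ?_
    filter_upwards [self_mem_nhdsWithin] with z hz
    rcases hz with ⟨⟨hz0, hzδ⟩, hzne⟩
    have hz0' : 0 < z := lt_of_le_of_ne hz0 (fun h => hzne (by simp [← h]))
    have hu : 0 ≤ u z := le_of_lt (hupos z ⟨hz0', hzδ⟩)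
    simp only [slope_def_field, hu0, sub_zero]
    exact div_nonneg hu hz0'.le
  nlinarith [hsq, hnonneg]
end

section
/- Suppose u: [0, δ) → ℝ is C³ with u(0) = 0, u'(0) = 1, satisfying u·(u'' - (2/(1-z))·u') - (3/2)·(u'² - 1) = F·u² on [0, δ) with F continuously differentiable. Then u''(0) = -1. -/
open Set

/-- Second-order regularity condition at null infinity: if `u` is `C³` on `[0, δ)` with
`u(0) = 0`, `u'(0) = 1`, satisfying `u·(u'' - (2/(1-z))·u') - (3/2)·(u'² - 1) = F·u²`
with `F` continuously differentiable, then `u''(0) = -1`. -/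
theorem hamiltonian_regularity_second_derivative
    (δ : ℝ) (hδ0 : 0 < δ) (hδ1 : δ < 1)
    (u u' u'' u''' F F' : ℝ → ℝ)
    (hder : ∀ z ∈ Ico (0 : ℝ) δ, HasDerivWithinAt u (u' z) (Ico 0 δ) z)
    (hder' : ∀ z ∈ Ico (0 : ℝ) δ, HasDerivWithinAt u' (u'' z) (Ico 0 δ) z)
    (hder'' : ∀ z ∈ Ico (0 : ℝ) δ, HasDerivWithinAt u'' (u''' z) (Ico 0 δ) z)
    (hcontu''' : ContinuousOn u''' (Ico 0 δ))
    (hFder : ∀ z ∈ Ico (0 : ℝ) δ, HasDerivWithinAt F (F' z) (Ico 0 δ) z)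
    (hcontF' : ContinuousOn F' (Ico 0 δ))
    (hu0 : u 0 = 0) (hu'0 : u' 0 = 1)
    (hODE : ∀ z ∈ Ico (0 : ℝ) δ,
      u z * (u'' z - (2 / (1 - z)) * u' z) - (3 / 2) * ((u' z) ^ 2 - 1)
        = F z * (u z) ^ 2) :
    u'' 0 = -1 := by
  set s := Ico (0:ℝ) δ with hs
  have h0 : (0:ℝ) ∈ s := ⟨le_refl _, hδ0⟩
  have hU : UniqueDiffWithinAt ℝ s 0 := (uniqueDiffOn_Ico 0 δ) 0 h0
  have hc : HasDerivWithinAt (fun z : ℝ => 2 / (1 - z)) 2 s 0 := by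
    have h1 : HasDerivWithinAt (fun z : ℝ => 1 - z) (-1) s 0 := by
      simpa using (hasDerivWithinAt_id (0:ℝ) s).const_sub 1
    have h2 := h1.inv (by norm_num)
    have h3 := h2.const_mul (2:ℝ)
    have : (2:ℝ) * (-(-1) / (1 - 0)^2) = 2 := by norm_num
    simpa [div_eq_mul_inv, this] using h3
  have hA := ((hder 0 h0).mul ((hder'' 0 h0).sub (hc.mul (hder' 0 h0)))).sub
    ((((hder' 0 h0).pow 2).sub_const 1).const_mul ((3:ℝ)/2))
  have hR := (hFder 0 h0).mul ((hder 0 h0).pow 2)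
  have hL2 : HasDerivWithinAt
      (fun y => u y * (u'' y - 2 / (1 - y) * u' y) - 3 / 2 * (u' y ^ 2 - 1))
      (F' 0 * u 0 ^ 2 + F 0 * (↑2 * u 0 ^ (2 - 1) * u' 0)) s 0 :=
    hR.congr (fun y hy => hODE y hy) (hODE 0 h0)
  have heq := hU.eq_deriv _ hA hL2
  simp only [hu0, hu'0] at heq
  norm_num at heq
  linarith
end

section
/- Let N(r) = 1 - 2M/r, let C > 0, D, M be real constants, and let α₀(r) = sqrt(N(r) + (C·r - D/r²)²) be positive on (r₁, ∞). Then α₀ solves the ODE α₀·(α₀·α')' + (2/r)·α₀²·α' - 3·(C² + 2D²/r⁶)·α = 0 on (r₁, ∞) when α = α₀ (i.e., α₀ is a particular solution of this linear second-order ODE). -/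
open Set

/-- `α₀(r) = sqrt(N(r) + (C·r - D/r²)²)` with `N(r) = 1 - 2M/r` is a particular solution
of the CMC lapse equation `α₀·(α₀·α')' + (2/r)·α₀²·α' - 3·(C² + 2D²/r⁶)·α = 0`
on `(r₁, ∞)`. -/
theorem cmc_lapse_particular_solution
    (M C D r₁ : ℝ) (hC : 0 < C) (hr₁ : 0 < r₁)
    (N α₀ : ℝ → ℝ)
    (hN : ∀ r, N r = 1 - 2 * M / r)
    (hα₀ : ∀ r, α₀ r = Real.sqrt (N r + (C * r - D / r ^ 2) ^ 2))
    (hpos : ∀ r ∈ Ioi r₁, 0 < N r + (C * r - D / r ^ 2) ^ 2) :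
    ∀ r ∈ Ioi r₁,
      α₀ r * deriv (fun s => α₀ s * deriv α₀ s) r
        + (2 / r) * (α₀ r) ^ 2 * deriv α₀ r
        - 3 * (C ^ 2 + 2 * D ^ 2 / r ^ 6) * α₀ r = 0 := by
  set f : ℝ → ℝ := fun s => 1 - 2 * M / s + (C * s - D / s ^ 2) ^ 2 with hf
  set f1 : ℝ → ℝ := fun s =>
    2 * M / s ^ 2 + 2 * ((C * s - D / s ^ 2) * (C + 2 * D / s ^ 3)) with hf1
  set f2 : ℝ → ℝ := fun s =>
    -4 * M / s ^ 3 + 2 * ((C + 2 * D / s ^ 3) * (C + 2 * D / s ^ 3)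
      + (C * s - D / s ^ 2) * (-6 * D / s ^ 4)) with hf2
  have hαf : ∀ r, α₀ r = Real.sqrt (f r) := by
    intro r; rw [hα₀, hN]
  have hfpos : ∀ r ∈ Ioi r₁, 0 < f r := by
    intro r hr; have := hpos r hr; rw [hN] at this; exact this
  -- derivative of f
  have hdf : ∀ r : ℝ, r ≠ 0 → HasDerivAt f (f1 r) r := by
    intro r hr
    have h1 : HasDerivAt (fun s : ℝ => 2 * M / s) ((0 * r - 2 * M * 1) / r ^ 2) r :=
      (hasDerivAt_const r (2 * M)).div (hasDerivAt_id r) hr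
    have h2 : HasDerivAt (fun s : ℝ => D / s ^ 2)
        ((0 * r ^ 2 - D * (2 * r ^ 1 * 1)) / (r ^ 2) ^ 2) r :=
      (hasDerivAt_const r D).div ((hasDerivAt_id r).pow 2) (pow_ne_zero 2 hr)
    have h3 := (((hasDerivAt_id r).const_mul C).sub h2).pow 2
    have h4 := ((hasDerivAt_const r (1 : ℝ)).sub h1).add h3
    refine h4.congr_deriv ?_
    simp only [hf1, Pi.sub_apply, Pi.add_apply, Pi.mul_apply, Pi.pow_apply, id, Nat.add_one_sub_one, pow_one]
    field_simp
    ring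
  -- derivative of f1
  have hdf1 : ∀ r : ℝ, r ≠ 0 → HasDerivAt f1 (f2 r) r := by
    intro r hr
    have h1 : HasDerivAt (fun s : ℝ => 2 * M / s ^ 2)
        ((0 * r ^ 2 - 2 * M * (2 * r ^ 1 * 1)) / (r ^ 2) ^ 2) r :=
      (hasDerivAt_const r (2 * M)).div ((hasDerivAt_id r).pow 2) (pow_ne_zero 2 hr)
    have h2 : HasDerivAt (fun s : ℝ => D / s ^ 2)
        ((0 * r ^ 2 - D * (2 * r ^ 1 * 1)) / (r ^ 2) ^ 2) r :=
      (hasDerivAt_const r D).div ((hasDerivAt_id r).pow 2) (pow_ne_zero 2 hr)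
    have hu := ((hasDerivAt_id r).const_mul C).sub h2
    have h3 : HasDerivAt (fun s : ℝ => 2 * D / s ^ 3)
        ((0 * r ^ 3 - 2 * D * (3 * r ^ 2 * 1)) / (r ^ 3) ^ 2) r :=
      (hasDerivAt_const r (2 * D)).div ((hasDerivAt_id r).pow 3) (pow_ne_zero 3 hr)
    have hv := (hasDerivAt_const r C).add h3
    have h4 := ((hu.mul hv).const_mul 2)
    have h5 := h1.add h4
    refine h5.congr_deriv ?_
    simp only [hf1, hf2, Pi.sub_apply, Pi.add_apply, Pi.mul_apply, id]
    field_simp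
    ring
  intro r hr
  have hr0 : (0 : ℝ) < r := hr₁.trans hr
  have hfr : 0 < f r := hfpos r hr
  -- derivative of α₀ on the interval
  have hsq : ∀ s ∈ Ioi r₁, HasDerivAt α₀ (f1 s / (2 * Real.sqrt (f s))) s := by
    intro s hs
    have hfun : α₀ = fun y => Real.sqrt (f y) := funext hαf
    rw [hfun]
    exact (hdf s (hr₁.trans hs).ne').sqrt (hfpos s hs).ne'
  have hprod : ∀ s ∈ Ioi r₁, α₀ s * deriv α₀ s = f1 s / 2 := by
    intro s hs
    have hs0 : Real.sqrt (f s) ≠ 0 := (Real.sqrt_pos.mpr (hfpos s hs)).ne'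
    rw [(hsq s hs).deriv, hαf]
    field_simp
  have hEq : (fun s => α₀ s * deriv α₀ s) =ᶠ[nhds r] (fun s => f1 s / 2) :=
    Filter.eventuallyEq_of_mem (isOpen_Ioi.mem_nhds hr) hprod
  have hd2 : deriv (fun s => α₀ s * deriv α₀ s) r = f2 r / 2 := by
    rw [hEq.deriv_eq]
    exact ((hdf1 r hr0.ne').div_const 2).deriv
  rw [hd2, (hsq r hr).deriv, hαf r]
  set s := Real.sqrt (f r) with hsdef
  have hs0 : s ≠ 0 := (Real.sqrt_pos.mpr hfr).ne'
  simp only [hf1, hf2]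
  field_simp
  ring
end

section
/- Let u(z) = z - z²/2 - (f₀/6)z³ - ((3f₀+f₁)/8)z⁴·log z + u₄z⁴ + O(z⁵ log z) and v(z) = f₀z + (3f₀+f₁)z²log z + v₂z² + O(z³ log z) be formal polyhomogeneous series. Then S(z) := (1/u)·(u_zz + u_z/(1-z) + (3/2)v) extends continuously to z = 0, with S(0) = f₀/2; in particular, the log z terms cancel in u·S to the orders shown. -/
open Set Filter Asymptotics

private lemma aux_mem : ∀ᶠ z in nhdsWithin (0:ℝ) (Ioi 0), z ∈ Ioo (0:ℝ) (1/2) :=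
  Ioo_mem_nhdsGT_of_mem (by constructor <;> norm_num)

/-- `z^(n+1) * log z = O(z^n)` as `z → 0⁺`. -/
private lemma aux_powlog1 (n : ℕ) :
    (fun z : ℝ => z ^ (n+1) * Real.log z) =O[nhdsWithin 0 (Ioi 0)] fun z => z ^ n := by
  refine IsBigO.of_bound 1 ?_
  filter_upwards [aux_mem] with z hz
  have h1 : |Real.log z * z| < 1 := Real.abs_log_mul_self_lt z hz.1 (by linarith [hz.2])
  have : z ^ (n+1) * Real.log z = z ^ n * (Real.log z * z) := by ring
  rw [this, Real.norm_eq_abs, Real.norm_eq_abs, abs_mul, one_mul]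
  calc |z ^ n| * |Real.log z * z| ≤ |z ^ n| * 1 := by
        exact mul_le_mul_of_nonneg_left h1.le (abs_nonneg _)
    _ = |z ^ n| := mul_one _

private lemma aux_pow {m n : ℕ} (h : m ≤ n) :
    (fun z : ℝ => z ^ n) =O[nhdsWithin 0 (Ioi 0)] fun z => z ^ m := by
  refine IsBigO.of_bound 1 ?_
  filter_upwards [aux_mem] with z hz
  rw [Real.norm_eq_abs, Real.norm_eq_abs, one_mul, abs_pow, abs_pow]
  exact pow_le_pow_of_le_one (abs_nonneg z) (by rw [abs_of_pos hz.1]; linarith [hz.2]) h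

private lemma aux_powlog {m n : ℕ} (h : m < n) :
    (fun z : ℝ => z ^ n * Real.log z) =O[nhdsWithin 0 (Ioi 0)] fun z => z ^ m := by
  obtain ⟨k, rfl⟩ := Nat.exists_eq_add_of_lt h
  exact (aux_powlog1 (m + k)).trans (aux_pow (Nat.le_add_right m k))

private lemma aux_inv_bigO :
    (fun z : ℝ => (1 - z)⁻¹) =O[nhdsWithin 0 (Ioi 0)] (fun _ => (1:ℝ)) := by
  have h : Tendsto (fun z : ℝ => (1 - z)⁻¹) (nhdsWithin 0 (Ioi 0)) (nhds 1) := by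
    have h1 : Tendsto (fun z : ℝ => 1 - z) (nhds 0) (nhds 1) := by
      exact (continuous_const.sub continuous_id).tendsto' (0:ℝ) 1 (by norm_num)
    simpa using (h1.mono_left nhdsWithin_le_nhds).inv₀ (by norm_num)
  exact h.isBigO_one ℝ

/-- divide an `O(z^2)` function by `1 - z`. -/
private lemma aux_div {g : ℝ → ℝ} (hg : g =O[nhdsWithin 0 (Ioi 0)] fun z : ℝ => z ^ 2) :
    (fun z => g z / (1 - z)) =O[nhdsWithin 0 (Ioi 0)] fun z : ℝ => z ^ 2 := by
  have := hg.mul aux_inv_bigO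
  simpa [div_eq_mul_inv] using this

/-- Given the polyhomogeneous expansions of `u` (and its formal derivatives `u_z`, `u_zz`)
and of `v` at null infinity, the apparently singular quantity
`S = (1/u)·(u_zz + u_z/(1-z) + (3/2)·v)` is regular: the `log z` terms cancel in `u·S`
(so that `u·S = (f₀/2)·z + O(z²)`), and `S` extends continuously to `z = 0` with
`S(0) = f₀/2`. -/
theorem singular_term_regular_at_scri
    (f₀ f₁ u₄ v₂ : ℝ) (u uz uzz v : ℝ → ℝ)
    (hu : (fun z => u z - (z - z ^ 2 / 2 - (f₀ / 6) * z ^ 3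
        - ((3 * f₀ + f₁) / 8) * z ^ 4 * Real.log z + u₄ * z ^ 4))
      =O[nhdsWithin 0 (Ioi 0)] (fun z => z ^ 5 * Real.log z))
    (huz : (fun z => uz z - (1 - z - (f₀ / 2) * z ^ 2
        - ((3 * f₀ + f₁) / 8) * (4 * z ^ 3 * Real.log z + z ^ 3) + 4 * u₄ * z ^ 3))
      =O[nhdsWithin 0 (Ioi 0)] (fun z => z ^ 4 * Real.log z))
    (huzz : (fun z => uzz z - (-1 - f₀ * z
        - ((3 * f₀ + f₁) / 8) * (12 * z ^ 2 * Real.log z + 7 * z ^ 2) + 12 * u₄ * z ^ 2))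
      =O[nhdsWithin 0 (Ioi 0)] (fun z => z ^ 3 * Real.log z))
    (hv : (fun z => v z - (f₀ * z + (3 * f₀ + f₁) * z ^ 2 * Real.log z + v₂ * z ^ 2))
      =O[nhdsWithin 0 (Ioi 0)] (fun z => z ^ 3 * Real.log z)) :
    ((fun z => (uzz z + uz z / (1 - z) + (3 / 2) * v z) - (f₀ / 2) * z)
      =O[nhdsWithin 0 (Ioi 0)] (fun z => z ^ 2)) ∧
    Tendsto (fun z => (uzz z + uz z / (1 - z) + (3 / 2) * v z) / u z)
      (nhdsWithin 0 (Ioi 0)) (nhds (f₀ / 2)) := by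
  set l := nhdsWithin (0:ℝ) (Ioi 0) with hl
  have h2 : (fun z : ℝ => z ^ 2) =O[l] fun z => z ^ 2 := isBigO_refl _ _
  have h3 : (fun z : ℝ => z ^ 3) =O[l] fun z : ℝ => z ^ 2 := aux_pow (by norm_num)
  have h4 : (fun z : ℝ => z ^ 4) =O[l] fun z : ℝ => z ^ 2 := aux_pow (by norm_num)
  have h3L : (fun z : ℝ => z ^ 3 * Real.log z) =O[l] fun z : ℝ => z ^ 2 :=
    aux_powlog (by norm_num)
  have h4L : (fun z : ℝ => z ^ 4 * Real.log z) =O[l] fun z : ℝ => z ^ 2 :=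
    aux_powlog (by norm_num)
  have h5L : (fun z : ℝ => z ^ 5 * Real.log z) =O[l] fun z : ℝ => z ^ 2 :=
    aux_powlog (by norm_num)
  -- the key algebraic identity
  have key : (fun z => (uzz z + uz z / (1 - z) + (3 / 2) * v z) - (f₀ / 2) * z)
      =ᶠ[l] (fun z =>
        (uzz z - (-1 - f₀ * z
          - ((3 * f₀ + f₁) / 8) * (12 * z ^ 2 * Real.log z + 7 * z ^ 2) + 12 * u₄ * z ^ 2))
        + (3 / 2) * (v z - (f₀ * z + (3 * f₀ + f₁) * z ^ 2 * Real.log z + v₂ * z ^ 2))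
        + ((uz z - (1 - z - (f₀ / 2) * z ^ 2
            - ((3 * f₀ + f₁) / 8) * (4 * z ^ 3 * Real.log z + z ^ 3) + 4 * u₄ * z ^ 3))
          + ((12 * u₄ - 7 * ((3 * f₀ + f₁) / 8) - f₀ / 2 + (3 / 2) * v₂) * z ^ 2
            - 4 * ((3 * f₀ + f₁) / 8) * z ^ 3 * Real.log z
            + (6 * ((3 * f₀ + f₁) / 8) - 8 * u₄ - (3 / 2) * v₂) * z ^ 3)) / (1 - z)) := by
    filter_upwards [aux_mem] with z hz
    have h1z : (1 : ℝ) - z ≠ 0 := by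
      have := hz.2; intro h; rw [sub_eq_zero] at h; rw [← h] at this; norm_num at this
    field_simp
    ring
  -- the right-hand side is O(z^2)
  have ha : (fun z : ℝ => (12 * u₄ - 7 * ((3 * f₀ + f₁) / 8) - f₀ / 2 + 3 / 2 * v₂) * z ^ 2)
      =O[l] fun z : ℝ => z ^ 2 := h2.const_mul_left _
  have hb : (fun z : ℝ => 4 * ((3 * f₀ + f₁) / 8) * z ^ 3 * Real.log z)
      =O[l] fun z : ℝ => z ^ 2 :=
    (h3L.const_mul_left (4 * ((3 * f₀ + f₁) / 8))).congr_left fun z => by ring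
  have hc : (fun z : ℝ => (6 * ((3 * f₀ + f₁) / 8) - 8 * u₄ - 3 / 2 * v₂) * z ^ 3)
      =O[l] fun z : ℝ => z ^ 2 := h3.const_mul_left _
  have hin := (huz.trans h4L).add ((ha.sub hb).add hc)
  have hRHS := ((huzz.trans h3L).add ((hv.const_mul_left (3/2)).trans h3L)).add (aux_div hin)
  have part1 : (fun z => (uzz z + uz z / (1 - z) + (3 / 2) * v z) - (f₀ / 2) * z)
      =O[l] (fun z : ℝ => z ^ 2) := hRHS.congr' key.symm EventuallyEq.rfl
  refine ⟨part1, ?_⟩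
  -- u - z = O(z^2)
  have huz2 : (fun z => u z - z) =O[l] (fun z : ℝ => z ^ 2) := by
    have hp1 : (fun z : ℝ => z ^ 2 / 2) =O[l] fun z : ℝ => z ^ 2 :=
      (h2.const_mul_left (1/2)).congr_left fun z => by ring
    have hp2 : (fun z : ℝ => (f₀ / 6) * z ^ 3) =O[l] fun z : ℝ => z ^ 2 := h3.const_mul_left _
    have hp3 : (fun z : ℝ => ((3 * f₀ + f₁) / 8) * z ^ 4 * Real.log z)
        =O[l] fun z : ℝ => z ^ 2 :=
      (h4L.const_mul_left ((3 * f₀ + f₁) / 8)).congr_left fun z => by ring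
    have hp4 : (fun z : ℝ => u₄ * z ^ 4) =O[l] fun z : ℝ => z ^ 2 := h4.const_mul_left _
    have hpoly := ((hp1.neg_left.sub hp2).sub hp3).add hp4
    have := (hu.trans h5L).add hpoly
    refine this.congr_left fun z => by ring
  -- tendsto helpers: z → 0 along l
  have hz0 : Tendsto (fun z : ℝ => z) l (nhds 0) := tendsto_id.mono_left nhdsWithin_le_nhds
  have hz2div : (fun z : ℝ => z ^ 2 * z⁻¹) =ᶠ[l] fun z : ℝ => z := by
    filter_upwards [aux_mem] with z hz
    field_simp [ne_of_gt hz.1]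
  have hdivlim : ∀ {g : ℝ → ℝ} {c : ℝ}, ((fun z => g z - c * z) =O[l] fun z : ℝ => z ^ 2) →
      Tendsto (fun z => g z / z) l (nhds c) := by
    intro g c hg
    have h1 : (fun z => (g z - c * z) * z⁻¹) =O[l] fun z : ℝ => z :=
      (hg.mul (isBigO_refl (fun z : ℝ => z⁻¹) l)).congr' EventuallyEq.rfl hz2div
    have h2 : Tendsto (fun z => (g z - c * z) * z⁻¹) l (nhds 0) := h1.trans_tendsto hz0
    have h3 : (fun z => (g z - c * z) * z⁻¹) =ᶠ[l] fun z => g z / z - c := by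
      filter_upwards [aux_mem] with z hz
      field_simp [ne_of_gt hz.1]
    have h4 : Tendsto (fun z => g z / z - c) l (nhds 0) := h2.congr' h3
    have := h4.add (tendsto_const_nhds (x := c))
    simpa using this
  have hW : Tendsto (fun z => (uzz z + uz z / (1 - z) + (3 / 2) * v z) / z) l
      (nhds (f₀ / 2)) := hdivlim part1
  have hU : Tendsto (fun z => u z / z) l (nhds 1) := by
    simpa using hdivlim (c := 1) (huz2.congr_left fun z => by ring)
  have hfin := hW.div hU (by norm_num)
  rw [div_one] at hfin
  refine hfin.congr' ?_
  filter_upwards [aux_mem] with z hz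
  have hzne : z ≠ 0 := ne_of_gt hz.1
  rcases eq_or_ne (u z) 0 with h | h
  · simp [h]
  · rw [Pi.div_apply]
    field_simp
end
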